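/- Set K := e · ∏_{l≥1} (1 − 2/((l+1)(l+2)))^{−1}. Then for all integers N ≥ 1, 1 ≤ i ≤ N and n ≥ 1, P[S^{(N,i)} ≥ n] ≤ K · max(n/N, 1) · exp(−max(n/N − 1, 0)). -/

import Mathlib

open MeasureTheory Filter Finset
open scoped NNReal

/-- Stirling numbers of the second kind. -/
def stirling2 : ℕ → ℕ → ℕ
  | 0, 0 => 1
  | 0, _ + 1 => 0
  | _ + 1, 0 => 0
  | n + 1, k + 1 => (k + 1) * stirling2 n (k + 1) + stirling2 n k

/-- The transition matrix `M^{(N)}_{q,p} = S(q,p) · (N)_p / N^q`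
(`S(q,p) = 0` for `p > q`, so the entries with `p > q` vanish automatically). -/
noncomputable def transMat (N q p : ℕ) : ENNReal :=
  ((stirling2 q p * Nat.descFactorial N p : ℕ) : ENNReal) / (N : ENNReal) ^ q

/-- `R` is (a version of) the Markov chain with transition matrix `K` started at `i`:
its finite dimensional distributions are the required ones. -/
def IsMarkovChainWith {Ω : Type*} [MeasurableSpace Ω] (P : Measure Ω)
    (R : ℕ → Ω → ℕ) (i : ℕ) (K : ℕ → ℕ → ENNReal) : Prop :=
  ∀ (n : ℕ) (q : ℕ → ℕ),
    P {ω | ∀ m ≤ n, R m ω = q m} =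
      (if q 0 = i then 1 else 0) * ∏ m ∈ Finset.range n, K (q m) (q (m + 1))

/-- First hitting time of the absorbing state `1`. -/
noncomputable def hitOne {Ω : Type*} (R : ℕ → Ω → ℕ) (ω : Ω) : ℕ :=
  sInf {n | R n ω = 1}

/-- `K := e · ∏_{l ≥ 1} (1 − 2/((l+1)(l+2)))⁻¹` (product over `l ∈ ℕ*`, reindexed over `ℕ`). -/
noncomputable def Kconst : ℝ :=
  Real.exp 1 * ∏' l : ℕ, (1 - 2 / (((l : ℝ) + 2) * ((l : ℝ) + 3)))⁻¹


lemma stirling2_succ (n k : ℕ) :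
    stirling2 (n+1) (k+1) = (k + 1) * stirling2 n (k + 1) + stirling2 n k := rfl

lemma stirling2_eq_zero {q p : ℕ} (h : q < p) : stirling2 q p = 0 := by
  induction q generalizing p with
  | zero => cases p with
    | zero => omega
    | succ p => rfl
  | succ n ih =>
    cases p with
    | zero => omega
    | succ p => rw [stirling2_succ, ih (by omega), ih (by omega)]; ring

lemma step_sum (N q : ℕ) (G : ℕ → ℝ) :
    ∑ p ∈ range (N+1), G p * (stirling2 (q+1) p * N.descFactorial p : ℝ)
    = ∑ p ∈ range (N+1), (G p * p + G (p+1) * ((N:ℝ) - p)) * (stirling2 q p * N.descFactorial p : ℝ) := by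
  rw [Finset.sum_range_succ' (fun p => G p * (stirling2 (q+1) p * N.descFactorial p : ℝ)) N]
  have h0 : G 0 * (stirling2 (q+1) 0 * N.descFactorial 0 : ℝ) = 0 := by
    simp [stirling2]
  rw [h0, add_zero]
  have hsummand : ∀ p ∈ range N,
      G (p+1) * (stirling2 (q+1) (p+1) * N.descFactorial (p+1) : ℝ)
      = G (p+1) * (p+1) * (stirling2 q (p+1) * N.descFactorial (p+1) : ℝ)
        + G (p+1) * ((N:ℝ) - p) * (stirling2 q p * N.descFactorial p : ℝ) := by
    intro p hp
    have hpN : p ≤ N := by simp at hp; omega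
    have hd : (N.descFactorial (p+1) : ℝ) = ((N:ℝ) - p) * N.descFactorial p := by
      rw [Nat.descFactorial_succ]
      push_cast [Nat.cast_sub hpN]
      ring
    rw [stirling2_succ]
    push_cast
    rw [hd]
    ring
  rw [Finset.sum_congr rfl hsummand, Finset.sum_add_distrib]
  have e1 : ∑ p ∈ range N, G (p+1) * (p+1) * (stirling2 q (p+1) * N.descFactorial (p+1) : ℝ)
      = ∑ p ∈ range (N+1), G p * p * (stirling2 q p * N.descFactorial p : ℝ) := by
    rw [Finset.sum_range_succ' (fun p => G p * p * (stirling2 q p * N.descFactorial p : ℝ)) N]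
    simp
  have e2 : ∑ p ∈ range N, G (p+1) * ((N:ℝ) - p) * (stirling2 q p * N.descFactorial p : ℝ)
      = ∑ p ∈ range (N+1), G (p+1) * ((N:ℝ) - p) * (stirling2 q p * N.descFactorial p : ℝ) := by
    rw [Finset.sum_range_succ]
    simp
  rw [e1, e2, ← Finset.sum_add_distrib]
  exact Finset.sum_congr rfl (fun p _ => by push_cast; ring)

lemma rowsum (N q : ℕ) :
    ∑ p ∈ range (N+1), (stirling2 q p * N.descFactorial p : ℝ) = (N:ℝ)^q := by
  induction q with
  | zero =>
    rw [Finset.sum_eq_single 0]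
    · simp [stirling2]
    · intro b _ hb
      have : stirling2 0 b = 0 := stirling2_eq_zero (by omega)
      simp [this]
    · simp
  | succ q ih =>
    have := step_sum N q (fun _ => 1)
    simp only [one_mul] at this
    rw [this]
    have h2 : ∀ p ∈ range (N+1), ((p:ℝ) + ((N:ℝ) - p)) * (stirling2 q p * N.descFactorial p : ℝ)
        = (N:ℝ) * (stirling2 q p * N.descFactorial p : ℝ) := fun p _ => by ring
    rw [Finset.sum_congr rfl h2, ← Finset.mul_sum, ih]
    ring

lemma momentsum (N q : ℕ) :
    ∑ p ∈ range (N+1), (p:ℝ) * (stirling2 q p * N.descFactorial p : ℝ)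
      = (N:ℝ)^(q+1) - N * ((N:ℝ) - 1)^q := by
  induction q with
  | zero =>
    rw [Finset.sum_eq_single 0]
    · simp
    · intro b _ hb
      have : stirling2 0 b = 0 := stirling2_eq_zero (by omega)
      simp [this]
    · simp
  | succ q ih =>
    rw [step_sum N q (fun p => (p:ℝ))]
    have : ∀ p ∈ range (N+1),
        ((p:ℝ) * p + ((p+1 : ℕ):ℝ) * ((N:ℝ) - p)) * (stirling2 q p * N.descFactorial p : ℝ)
        = ((N:ℝ) - 1) * ((p:ℝ) * (stirling2 q p * N.descFactorial p : ℝ))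
          + (N:ℝ) * (stirling2 q p * N.descFactorial p : ℝ) := by
      intro p _; push_cast; ring
    rw [Finset.sum_congr rfl this, Finset.sum_add_distrib, ← Finset.mul_sum, ← Finset.mul_sum,
      ih, rowsum]
    ring


lemma stirling2_zero_right (q : ℕ) (hq : q ≠ 0) : stirling2 q 0 = 0 := by
  cases q with
  | zero => simp at hq
  | succ n => rfl

noncomputable def mReal (N q p : ℕ) : ℝ :=
  ((stirling2 q p * Nat.descFactorial N p : ℕ) : ℝ) / (N:ℝ)^q

noncomputable def Erow (N q : ℕ) : ℝ := (N:ℝ) * (1 - (((N:ℝ)-1)/N)^q) - 1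

lemma mReal_def (N q p : ℕ) : mReal N q p
    = ((stirling2 q p * Nat.descFactorial N p : ℕ) : ℝ) / (N:ℝ)^q := rfl


lemma mReal_nonneg (N q p : ℕ) : 0 ≤ mReal N q p := by
  unfold mReal; positivity

lemma mReal_eq_zero_of_lt {N q p : ℕ} (h : q < p) : mReal N q p = 0 := by
  unfold mReal; rw [stirling2_eq_zero h]; simp

lemma mReal_eq_zero_of_N_lt {N q p : ℕ} (h : N < p) : mReal N q p = 0 := by
  unfold mReal; rw [Nat.descFactorial_eq_zero_iff_lt.2 h]; simp


lemma mReal_zero_right {N q : ℕ} (hq : 1 ≤ q) : mReal N q 0 = 0 := by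
  unfold mReal; rw [stirling2_zero_right q (by omega)]; simp

lemma row_sum_one {N : ℕ} (hN : 1 ≤ N) (q : ℕ) :
    ∑ p ∈ range (N+1), mReal N q p = 1 := by
  have hNq : (0:ℝ) < (N:ℝ)^q := by positivity
  unfold mReal
  rw [← Finset.sum_div]
  push_cast
  rw [rowsum]
  field_simp

lemma row_moment {N : ℕ} (hN : 1 ≤ N) (q : ℕ) :
    ∑ p ∈ range (N+1), ((p:ℝ)-1) * mReal N q p = Erow N q := by
  have hNq : (0:ℝ) < (N:ℝ)^q := by positivity
  have hN0 : (0:ℝ) < (N:ℝ) := by exact_mod_cast hN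
  have split : ∀ p ∈ range (N+1), ((p:ℝ)-1) * mReal N q p
      = (p:ℝ) * (stirling2 q p * N.descFactorial p : ℝ) / (N:ℝ)^q
        - (stirling2 q p * N.descFactorial p : ℝ) / (N:ℝ)^q := by
    intro p _; unfold mReal; push_cast; ring
  rw [Finset.sum_congr rfl split, Finset.sum_sub_distrib, ← Finset.sum_div, ← Finset.sum_div,
    momentsum, rowsum]
  unfold Erow
  rw [div_pow]
  field_simp
  ring

lemma Erow_succ {N : ℕ} (hN : 1 ≤ N) (q : ℕ) :
    Erow N (q+1) = Erow N q + (((N:ℝ)-1)/N)^q := by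
  have hN0 : (N:ℝ) ≠ 0 := by positivity
  unfold Erow
  rw [pow_succ]
  field_simp
  ring

lemma Erow_one {N : ℕ} (hN : 1 ≤ N) : Erow N 1 = 0 := by
  have hN0 : (N:ℝ) ≠ 0 := by positivity
  unfold Erow; field_simp; ring

lemma tfacts {N : ℕ} (hN : 1 ≤ N) : 0 ≤ ((N:ℝ)-1)/N ∧ ((N:ℝ)-1)/N ≤ 1 := by
  have hN0 : (0:ℝ) < (N:ℝ) := by exact_mod_cast hN
  constructor
  · apply div_nonneg _ (le_of_lt hN0)
    have : (1:ℝ) ≤ N := by exact_mod_cast hN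
    linarith
  · rw [div_le_one hN0]; linarith

lemma Erow_le_lin {N : ℕ} (hN : 1 ≤ N) {q : ℕ} (hq : 1 ≤ q) :
    Erow N q ≤ ((q:ℝ) - 1) * (((N:ℝ)-1)/N) := by
  obtain ⟨ht0, ht1⟩ := tfacts hN
  induction q, hq using Nat.le_induction with
  | base => rw [Erow_one hN]; norm_num
  | succ q hq ih =>
    rw [Erow_succ hN]
    have hpow : (((N:ℝ)-1)/N)^q ≤ ((N:ℝ)-1)/N := by
      calc (((N:ℝ)-1)/N)^q ≤ (((N:ℝ)-1)/N)^1 := pow_le_pow_of_le_one ht0 ht1 hq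
      _ = _ := pow_one _
    push_cast
    have : (q:ℝ) - 1 ≥ 0 := by
      have : (1:ℝ) ≤ q := by exact_mod_cast hq
      linarith
    nlinarith

lemma Erow_eq_geom {N : ℕ} (hN : 1 ≤ N) (d : ℕ) :
    Erow N (d+1) = ∑ j ∈ range d, (((N:ℝ)-1)/N)^(j+1) := by
  induction d with
  | zero => simpa using Erow_one hN
  | succ d ih => rw [Erow_succ hN, ih, Finset.sum_range_succ]

lemma pow_one_sub_le {u : ℝ} (h0 : 0 ≤ u) (h1 : u ≤ 1) (j : ℕ) :
    (1-u)^j ≤ 1 - j*u + j*((j:ℝ)-1)*u^2/2 := by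
  induction j with
  | zero => norm_num
  | succ j ih =>
    have h2 : 0 ≤ 1 - u := by linarith
    have h3 : (1-u)^(j+1) ≤ (1-u) * (1 - j*u + j*((j:ℝ)-1)*u^2/2) := by
      rw [pow_succ, mul_comm]
      exact mul_le_mul_of_nonneg_left ih h2
    refine h3.trans ?_
    push_cast
    have hj : (0:ℝ) ≤ j := Nat.cast_nonneg j
    have hjj : (0:ℝ) ≤ (j:ℝ)*((j:ℝ)-1) := by
      rcases Nat.eq_zero_or_pos j with h | h
      · simp [h]
      · have : (1:ℝ) ≤ j := by exact_mod_cast h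
        nlinarith
    nlinarith [mul_nonneg hjj (mul_nonneg (mul_nonneg h0 h0) h0)]

lemma sum_combined (u : ℝ) (d : ℕ) :
    ∑ j ∈ range d, (1 - ((j:ℝ)+1)*u + ((j:ℝ)+1)*j*u^2/2)
      = d - d*((d:ℝ)+1)*u/2 + ((d:ℝ)-1)*d*((d:ℝ)+1)*u^2/6 := by
  induction d with
  | zero => simp
  | succ d ih => rw [Finset.sum_range_succ, ih]; push_cast; ring

lemma Erow_le_quad {N : ℕ} (hN : 1 ≤ N) {q : ℕ} (hq : 1 ≤ q) (hqN : q ≤ N) :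
    Erow N q ≤ ((q:ℝ) - 1) - ((q:ℝ)-1)^2/(3*N) := by
  obtain ⟨d, rfl⟩ : ∃ d, q = d + 1 := ⟨q - 1, by omega⟩
  obtain ⟨ht0, ht1⟩ := tfacts hN
  have hN0 : (0:ℝ) < (N:ℝ) := by exact_mod_cast hN
  set u : ℝ := 1/N with hu
  have hu0 : 0 < u := by positivity
  have hu1 : u ≤ 1 := by rw [hu, div_le_one hN0]; exact_mod_cast hN
  have ht : ((N:ℝ)-1)/N = 1 - u := by
    rw [hu, sub_div, div_self (ne_of_gt hN0)]
  rw [Erow_eq_geom hN d, ht]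
  have hbd : ∑ j ∈ range d, (1-u)^(j+1) ≤
      ∑ j ∈ range d, (1 - ((j:ℝ)+1)*u + ((j:ℝ)+1)*j*u^2/2) := by
    apply Finset.sum_le_sum
    intro j _
    have := pow_one_sub_le hu0.le hu1 (j+1)
    push_cast at this ⊢
    linarith [this]
  refine hbd.trans ?_
  rw [sum_combined]
  have hdN : (d:ℝ) + 1 ≤ N := by exact_mod_cast hqN
  have hud : u * ((d:ℝ)+1) ≤ 1 := by
    rw [hu, div_mul_eq_mul_div, div_le_one hN0]
    linarith
  have hd0 : (0:ℝ) ≤ d := Nat.cast_nonneg d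
  have hrhs : (((d:ℕ)+1 : ℕ):ℝ) - 1 = (d:ℝ) := by push_cast; ring
  have hq2 : ((d:ℝ))^2/(3*N) = (d:ℝ)^2*u/3 := by rw [hu]; ring
  push_cast
  rw [show ((d:ℝ) + 1 - 1) = (d:ℝ) by ring]
  rw [hq2]
  rcases Nat.eq_zero_or_pos d with h | h
  · subst h; simp
  · have hd1 : (1:ℝ) ≤ d := by exact_mod_cast h
    nlinarith [mul_le_mul_of_nonneg_left hud
        (mul_nonneg (mul_nonneg hu0.le hd0) (by linarith : (0:ℝ) ≤ (d:ℝ)-1)),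
      mul_nonneg hu0.le hd0, mul_nonneg (mul_nonneg hu0.le hd0) hd0]

noncomputable def wvec (N i : ℕ) : ℕ → ℕ → ℝ
  | 0, p => if p = i then 1 else 0
  | k+1, p => if p = 1 then 0 else ∑ j ∈ Finset.range (N+1), wvec N i k j * mReal N j p

lemma wvec_succ (N i k p : ℕ) : wvec N i (k+1) p
    = if p = 1 then 0 else ∑ j ∈ Finset.range (N+1), wvec N i k j * mReal N j p := rfl

section props
variable {N i : ℕ} (hN : 2 ≤ N) (hi : 2 ≤ i) (hiN : i ≤ N)
include hN hi hiN

lemma hN1 : 1 ≤ N := by omega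

lemma wvec_nonneg : ∀ k p, 0 ≤ wvec N i k p := by
  intro k
  induction k with
  | zero => intro p; unfold wvec; positivity
  | succ k ih =>
    intro p
    rw [wvec_succ]
    split
    · exact le_refl 0
    · exact Finset.sum_nonneg fun j _ => mul_nonneg (ih j) (mReal_nonneg N j p)

lemma wvec_supp : ∀ k p, wvec N i k p ≠ 0 → 2 ≤ p ∧ p ≤ N := by
  intro k
  induction k with
  | zero =>
    intro p hp
    unfold wvec at hp
    by_cases h : p = i
    · subst h; omega
    · simp [h] at hp
  | succ k ih =>
    intro p hp
    rw [wvec_succ] at hp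
    by_cases h1 : p = 1
    · simp [h1] at hp
    rw [if_neg h1] at hp
    obtain ⟨j, hj, hne⟩ := Finset.exists_ne_zero_of_sum_ne_zero hp
    have hw : wvec N i k j ≠ 0 := fun h => hne (by simp [h])
    have hm : mReal N j p ≠ 0 := fun h => hne (by simp [h])
    obtain ⟨hj2, hjN⟩ := ih j hw
    have hpj : p ≤ j := by
      by_contra h
      exact hm (mReal_eq_zero_of_lt (by omega))
    have hp0 : p ≠ 0 := by
      intro h
      subst h
      exact hm (mReal_zero_right (by omega))
    exact ⟨by omega, by omega⟩

lemma wvec_one_eq_zero : ∀ k, wvec N i k 1 = 0 := by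
  intro k
  by_contra h
  have := (wvec_supp hN hi hiN k 1 h).1
  omega

lemma mass_zero : ∑ p ∈ range (N+1), wvec N i 0 p = 1 := by
  unfold wvec
  rw [Finset.sum_ite_eq' (range (N+1)) i (fun _ => (1:ℝ))]
  simp [Finset.mem_range]
  omega

lemma mass_succ_le (k : ℕ) : ∑ p ∈ range (N+1), wvec N i (k+1) p
    ≤ ∑ p ∈ range (N+1), wvec N i k p := by
  have step1 : ∀ p ∈ range (N+1), wvec N i (k+1) p
      ≤ ∑ j ∈ range (N+1), wvec N i k j * mReal N j p := by
    intro p _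
    rw [wvec_succ]
    split
    · exact Finset.sum_nonneg fun j _ =>
        mul_nonneg (wvec_nonneg hN hi hiN k j) (mReal_nonneg N j p)
    · exact le_refl _
  calc ∑ p ∈ range (N+1), wvec N i (k+1) p
      ≤ ∑ p ∈ range (N+1), ∑ j ∈ range (N+1), wvec N i k j * mReal N j p :=
        Finset.sum_le_sum step1
    _ = ∑ j ∈ range (N+1), ∑ p ∈ range (N+1), wvec N i k j * mReal N j p :=
        Finset.sum_comm
    _ = ∑ j ∈ range (N+1), wvec N i k j := by
        apply Finset.sum_congr rfl
        intro j _
        rw [← Finset.mul_sum, row_sum_one (by omega : 1 ≤ N) j, mul_one]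

lemma mass_le_one (k : ℕ) : ∑ p ∈ range (N+1), wvec N i k p ≤ 1 := by
  induction k with
  | zero => rw [mass_zero hN hi hiN]
  | succ k ih => exact (mass_succ_le hN hi hiN k).trans ih

lemma mass_le_aval (k : ℕ) : ∑ p ∈ range (N+1), wvec N i k p
    ≤ ∑ p ∈ range (N+1), ((p:ℝ)-1) * wvec N i k p := by
  apply Finset.sum_le_sum
  intro p _
  by_cases h : wvec N i k p = 0
  · rw [h]; simp
  · have h2 := (wvec_supp hN hi hiN k p h).1
    have hw := wvec_nonneg hN hi hiN k p
    have : (2:ℝ) ≤ p := by exact_mod_cast h2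
    nlinarith

lemma aval_nonneg (k : ℕ) : 0 ≤ ∑ p ∈ range (N+1), ((p:ℝ)-1) * wvec N i k p := by
  apply Finset.sum_nonneg
  intro p _
  by_cases h : wvec N i k p = 0
  · rw [h]; simp
  · have h2 := (wvec_supp hN hi hiN k p h).1
    have hw := wvec_nonneg hN hi hiN k p
    have : (2:ℝ) ≤ p := by exact_mod_cast h2
    nlinarith

lemma aval_zero : ∑ p ∈ range (N+1), ((p:ℝ)-1) * wvec N i 0 p = (i:ℝ) - 1 := by
  unfold wvec
  have : ∀ p ∈ range (N+1), ((p:ℝ)-1) * (if p = i then (1:ℝ) else 0)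
      = if p = i then ((p:ℝ)-1) else 0 := by
    intro p _
    split <;> simp
  rw [Finset.sum_congr rfl this, Finset.sum_ite_eq' (range (N+1)) i (fun p => ((p:ℝ)-1))]
  rw [if_pos]
  simp [Finset.mem_range]
  omega

lemma aval_succ_eq (k : ℕ) : ∑ p ∈ range (N+1), ((p:ℝ)-1) * wvec N i (k+1) p
    = ∑ j ∈ range (N+1), wvec N i k j * Erow N j := by
  have step1 : ∀ p ∈ range (N+1), ((p:ℝ)-1) * wvec N i (k+1) p
      = ∑ j ∈ range (N+1), wvec N i k j * (((p:ℝ)-1) * mReal N j p) := by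
    intro p _
    rw [wvec_succ]
    by_cases h : p = 1
    · subst h
      simp
    · rw [if_neg h, Finset.mul_sum]
      apply Finset.sum_congr rfl
      intro j _
      ring
  rw [Finset.sum_congr rfl step1, Finset.sum_comm]
  apply Finset.sum_congr rfl
  intro j _
  rw [← Finset.mul_sum, row_moment (by omega : 1 ≤ N) j]

lemma aval_succ_le_lin (k : ℕ) : ∑ p ∈ range (N+1), ((p:ℝ)-1) * wvec N i (k+1) p
    ≤ (((N:ℝ)-1)/N) * ∑ p ∈ range (N+1), ((p:ℝ)-1) * wvec N i k p := by
  rw [aval_succ_eq hN hi hiN k, Finset.mul_sum]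
  apply Finset.sum_le_sum
  intro j _
  by_cases h : wvec N i k j = 0
  · rw [h]; simp
  · obtain ⟨hj2, hjN⟩ := wvec_supp hN hi hiN k j h
    have hw := wvec_nonneg hN hi hiN k j
    have hE := Erow_le_lin (by omega : 1 ≤ N) (by omega : 1 ≤ j)
    calc wvec N i k j * Erow N j ≤ wvec N i k j * (((j:ℝ)-1) * (((N:ℝ)-1)/N)) :=
          mul_le_mul_of_nonneg_left hE hw
      _ = ((N:ℝ)-1)/N * (((j:ℝ)-1) * wvec N i k j) := by ring

lemma bval_ge_aval_sq (k : ℕ) :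
    (∑ p ∈ range (N+1), ((p:ℝ)-1) * wvec N i k p)^2
      ≤ ∑ p ∈ range (N+1), ((p:ℝ)-1)^2 * wvec N i k p := by
  have cs := Finset.sum_mul_sq_le_sq_mul_sq (range (N+1))
    (fun p => Real.sqrt (wvec N i k p)) (fun p => ((p:ℝ)-1) * Real.sqrt (wvec N i k p))
  have e1 : ∀ p ∈ range (N+1), Real.sqrt (wvec N i k p) * (((p:ℝ)-1) * Real.sqrt (wvec N i k p))
      = ((p:ℝ)-1) * wvec N i k p := by
    intro p _
    have := Real.mul_self_sqrt (wvec_nonneg hN hi hiN k p)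
    nlinarith [this]
  have e2 : ∀ p ∈ range (N+1), (Real.sqrt (wvec N i k p))^2 = wvec N i k p := by
    intro p _
    exact Real.sq_sqrt (wvec_nonneg hN hi hiN k p)
  have e3 : ∀ p ∈ range (N+1), (((p:ℝ)-1) * Real.sqrt (wvec N i k p))^2
      = ((p:ℝ)-1)^2 * wvec N i k p := by
    intro p _
    rw [mul_pow, Real.sq_sqrt (wvec_nonneg hN hi hiN k p)]
  rw [Finset.sum_congr rfl e1, Finset.sum_congr rfl e2, Finset.sum_congr rfl e3] at cs
  have hb : 0 ≤ ∑ p ∈ range (N+1), ((p:ℝ)-1)^2 * wvec N i k p :=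
    Finset.sum_nonneg fun p _ => mul_nonneg (sq_nonneg _) (wvec_nonneg hN hi hiN k p)
  calc (∑ p ∈ range (N+1), ((p:ℝ)-1) * wvec N i k p)^2
      ≤ (∑ p ∈ range (N+1), wvec N i k p) * ∑ p ∈ range (N+1), ((p:ℝ)-1)^2 * wvec N i k p := cs
    _ ≤ 1 * ∑ p ∈ range (N+1), ((p:ℝ)-1)^2 * wvec N i k p :=
        mul_le_mul_of_nonneg_right (mass_le_one hN hi hiN k) hb
    _ = _ := one_mul _

lemma aval_succ_le_quad (k : ℕ) :
    ∑ p ∈ range (N+1), ((p:ℝ)-1) * wvec N i (k+1) p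
      ≤ (∑ p ∈ range (N+1), ((p:ℝ)-1) * wvec N i k p)
        - (∑ p ∈ range (N+1), ((p:ℝ)-1) * wvec N i k p)^2/(3*N) := by
  rw [aval_succ_eq hN hi hiN k]
  have step1 : ∑ j ∈ range (N+1), wvec N i k j * Erow N j
      ≤ ∑ j ∈ range (N+1), wvec N i k j * (((j:ℝ)-1) - ((j:ℝ)-1)^2/(3*N)) := by
    apply Finset.sum_le_sum
    intro j _
    by_cases h : wvec N i k j = 0
    · rw [h]; simp
    · obtain ⟨hj2, hjN⟩ := wvec_supp hN hi hiN k j h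
      exact mul_le_mul_of_nonneg_left
        (Erow_le_quad (by omega : 1 ≤ N) (by omega : 1 ≤ j) hjN)
        (wvec_nonneg hN hi hiN k j)
  refine step1.trans ?_
  have reshape : ∀ j ∈ range (N+1), wvec N i k j * (((j:ℝ)-1) - ((j:ℝ)-1)^2/(3*N))
      = ((j:ℝ)-1) * wvec N i k j - (((j:ℝ)-1)^2 * wvec N i k j)/(3*N) := by
    intro j _; ring
  rw [Finset.sum_congr rfl reshape, Finset.sum_sub_distrib, ← Finset.sum_div]
  have hb := bval_ge_aval_sq hN hi hiN k
  have h3N : (0:ℝ) < 3*N := by positivity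
  have : (∑ p ∈ range (N+1), ((p:ℝ)-1) * wvec N i k p)^2/(3*N)
      ≤ (∑ j ∈ range (N+1), ((j:ℝ)-1)^2 * wvec N i k j)/(3*N) := by gcongr
  linarith

lemma aval_le_harmonic (k : ℕ) :
    ∑ p ∈ range (N+1), ((p:ℝ)-1) * wvec N i k p ≤ 3*N/(k+2) := by
  induction k with
  | zero =>
    rw [aval_zero hN hi hiN]
    have h1 : (i:ℝ) ≤ N := by exact_mod_cast hiN
    have h2 : (2:ℝ) ≤ N := by exact_mod_cast hN
    rw [le_div_iff₀ (by norm_num : (0:ℝ) < (0:ℕ)+2)]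
    push_cast
    nlinarith
  | succ k ih =>
    have hq := aval_succ_le_quad hN hi hiN k
    set a := ∑ p ∈ range (N+1), ((p:ℝ)-1) * wvec N i k p with ha
    have ha0 : 0 ≤ a := aval_nonneg hN hi hiN k
    have h3N : (0:ℝ) < 3*N := by positivity
    have hk2 : (0:ℝ) < (k:ℝ)+2 := by positivity
    have hub : a ≤ 3*N/((k:ℝ)+2) := by exact_mod_cast ih
    -- monotonicity of x - x^2/(3N) on [0, 3N/2]
    have hub2 : 3*N/((k:ℝ)+2) ≤ 3*N/2 := by
      apply div_le_div_of_nonneg_left (by positivity) (by norm_num) (by linarith)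
    have mono : a - a^2/(3*N) ≤ (3*N/((k:ℝ)+2)) - (3*N/((k:ℝ)+2))^2/(3*N) := by
      have key : (3*N/((k:ℝ)+2)) - a ≥ 0 := by linarith
      have hsum : a + 3*N/((k:ℝ)+2) ≤ 3*N := by
        have : 3*N/((k:ℝ)+2) + 3*N/((k:ℝ)+2) ≤ 3*N := by
          rw [← add_div, div_le_iff₀ hk2]
          nlinarith
        linarith
      have expand : (3*N/((k:ℝ)+2)) - (3*N/((k:ℝ)+2))^2/(3*N) - (a - a^2/(3*N))
          = ((3*N/((k:ℝ)+2)) - a) * (1 - ((3*N/((k:ℝ)+2)) + a)/(3*N)) := by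
        field_simp
        ring
      nlinarith [mul_nonneg key (by
        have : ((3*N/((k:ℝ)+2)) + a)/(3*N) ≤ 1 := by
          rw [div_le_one h3N]; linarith
        linarith : (0:ℝ) ≤ 1 - ((3*N/((k:ℝ)+2)) + a)/(3*N))]
    have final : (3*N/((k:ℝ)+2)) - (3*N/((k:ℝ)+2))^2/(3*N) ≤ 3*N/((k:ℝ)+3) := by
      have hk3 : (0:ℝ) < (k:ℝ)+3 := by positivity
      have expand2 : (3*N/((k:ℝ)+2)) - (3*N/((k:ℝ)+2))^2/(3*N)
          = (3*N*((k:ℝ)+1))/(((k:ℝ)+2)^2) := by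
        field_simp
        ring
      rw [expand2, div_le_div_iff₀ (by positivity) hk3]
      nlinarith [h3N]
    calc ∑ p ∈ range (N+1), ((p:ℝ)-1) * wvec N i (k+1) p ≤ a - a^2/(3*N) := hq
      _ ≤ (3*N/((k:ℝ)+2)) - (3*N/((k:ℝ)+2))^2/(3*N) := mono
      _ ≤ 3*N/((k:ℝ)+3) := final
      _ = 3*N/(((k+1:ℕ):ℝ)+2) := by push_cast; ring

lemma aval_le_pow (m l : ℕ) :
    ∑ p ∈ range (N+1), ((p:ℝ)-1) * wvec N i (m+l) p
      ≤ (((N:ℝ)-1)/N)^l * ∑ p ∈ range (N+1), ((p:ℝ)-1) * wvec N i m p := by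
  induction l with
  | zero => simp
  | succ l ih =>
    have h1 := aval_succ_le_lin hN hi hiN (m+l)
    have ht0 : 0 ≤ ((N:ℝ)-1)/N := by
      have : (2:ℝ) ≤ N := by exact_mod_cast hN
      apply div_nonneg <;> linarith
    calc ∑ p ∈ range (N+1), ((p:ℝ)-1) * wvec N i (m+(l+1)) p
        = ∑ p ∈ range (N+1), ((p:ℝ)-1) * wvec N i ((m+l)+1) p := rfl
      _ ≤ (((N:ℝ)-1)/N) * ∑ p ∈ range (N+1), ((p:ℝ)-1) * wvec N i (m+l) p := h1
      _ ≤ (((N:ℝ)-1)/N) * ((((N:ℝ)-1)/N)^l * ∑ p ∈ range (N+1), ((p:ℝ)-1) * wvec N i m p) :=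
          mul_le_mul_of_nonneg_left ih ht0
      _ = (((N:ℝ)-1)/N)^(l+1) * ∑ p ∈ range (N+1), ((p:ℝ)-1) * wvec N i m p := by ring

end props

noncomputable def stepR (N : ℕ) (v : ℕ → ℝ) (p : ℕ) : ℝ :=
  if p = 1 then 0 else ∑ j ∈ Finset.range (N+1), v j * mReal N j p

def Gd (N : ℕ) (v : ℕ → ℝ) : Prop :=
  (∀ p, 0 ≤ v p) ∧ (∀ p, v p ≠ 0 → 2 ≤ p ∧ p ≤ N)

noncomputable def pathSum (N k : ℕ) (v : ℕ → ℝ) : ENNReal :=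
  ∑' c : Fin (k+1) → ℕ, (if ∀ m, c m ≠ 1 then ENNReal.ofReal (v (c 0)) else 0)
      * ∏ m : Fin k, transMat N (c m.castSucc) (c m.succ)

lemma transMat_ofReal {N : ℕ} (hN : 1 ≤ N) (q p : ℕ) :
    transMat N q p = ENNReal.ofReal (mReal N q p) := by
  rw [transMat, mReal_def]
  have hNq : (0:ℝ) < (N:ℝ)^q := by
    have : (0:ℝ) < (N:ℝ) := by exact_mod_cast hN
    positivity
  rw [ENNReal.ofReal_div_of_pos hNq, ENNReal.ofReal_natCast]
  congr 1
  rw [ENNReal.ofReal_pow (Nat.cast_nonneg N), ENNReal.ofReal_natCast]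

lemma stepR_good {N : ℕ} (hN : 1 ≤ N) {v : ℕ → ℝ} (hv : Gd N v) : Gd N (stepR N v) := by
  constructor
  · intro p
    unfold stepR
    split
    · exact le_refl 0
    · exact Finset.sum_nonneg fun j _ => mul_nonneg (hv.1 j) (mReal_nonneg N j p)
  · intro p hp
    unfold stepR at hp
    by_cases h1 : p = 1
    · simp [h1] at hp
    rw [if_neg h1] at hp
    obtain ⟨j, hj, hne⟩ := Finset.exists_ne_zero_of_sum_ne_zero hp
    have hw : v j ≠ 0 := fun h => hne (by simp [h])
    have hm : mReal N j p ≠ 0 := fun h => hne (by simp [h])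
    obtain ⟨hj2, hjN⟩ := hv.2 j hw
    have hpj : p ≤ j := by
      by_contra h
      exact hm (mReal_eq_zero_of_lt (by omega))
    have hp0 : p ≠ 0 := fun h => hm (h ▸ mReal_zero_right (by omega))
    exact ⟨by omega, by omega⟩

lemma inner_tsum {N : ℕ} (hN : 1 ≤ N) {v : ℕ → ℝ} (hv : Gd N v) (p : ℕ) (hp : p ≠ 1) :
    ∑' j : ℕ, ENNReal.ofReal (v j) * transMat N j p = ENNReal.ofReal (stepR N v p) := by
  have hsupp : ∀ j ∉ Finset.range (N+1), ENNReal.ofReal (v j) * transMat N j p = 0 := by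
    intro j hj
    have : v j = 0 := by
      by_contra h
      have := hv.2 j h
      exact hj (Finset.mem_range.2 (by omega))
    simp [this]
  rw [tsum_eq_sum hsupp]
  unfold stepR
  rw [if_neg hp]
  have reshape : ∀ j ∈ Finset.range (N+1), ENNReal.ofReal (v j) * transMat N j p
      = ENNReal.ofReal (v j * mReal N j p) := by
    intro j _
    rw [transMat_ofReal hN, ENNReal.ofReal_mul (hv.1 j)]
  rw [Finset.sum_congr rfl reshape,
    ← ENNReal.ofReal_sum_of_nonneg (fun j _ => mul_nonneg (hv.1 j) (mReal_nonneg N j p))]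

lemma pathSum_zero {N : ℕ} (hN : 1 ≤ N) {v : ℕ → ℝ} (hv : Gd N v) :
    pathSum N 0 v = ENNReal.ofReal (∑ p ∈ Finset.range (N+1), v p) := by
  unfold pathSum
  rw [← Equiv.tsum_eq (Equiv.funUnique (Fin 1) ℕ).symm]
  simp only [Finset.univ_eq_empty, Finset.prod_empty, mul_one]
  have h1 : v 1 = 0 := by
    by_contra h
    have := (hv.2 1 h).1
    omega
  have shape : ∀ j : ℕ, (if ∀ m : Fin 1, (Equiv.funUnique (Fin 1) ℕ).symm j m ≠ 1
      then ENNReal.ofReal (v ((Equiv.funUnique (Fin 1) ℕ).symm j 0)) else 0)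
      = ENNReal.ofReal (v j) := by
    intro j
    by_cases h : j = 1
    · subst h
      simp [h1]
    · simp [Equiv.funUnique, h]
  rw [tsum_congr shape]
  have hsupp : ∀ j ∉ Finset.range (N+1), ENNReal.ofReal (v j) = 0 := by
    intro j hj
    have : v j = 0 := by
      by_contra h
      have := hv.2 j h
      exact hj (Finset.mem_range.2 (by omega))
    simp [this]
  rw [tsum_eq_sum hsupp,
    ← ENNReal.ofReal_sum_of_nonneg (fun j _ => hv.1 j)]

lemma pathSum_succ {N : ℕ} (hN : 1 ≤ N) (k : ℕ) {v : ℕ → ℝ} (hv : Gd N v) :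
    pathSum N (k+1) v = pathSum N k (stepR N v) := by
  unfold pathSum
  rw [← Equiv.tsum_eq (Fin.consEquiv (fun _ : Fin (k+2) => ℕ))]
  rw [ENNReal.tsum_prod']
  have inner_eq : ∀ (j : ℕ) (c : Fin (k+1) → ℕ),
      (if ∀ m, (Fin.consEquiv (fun _ : Fin (k+2) => ℕ)) (j, c) m ≠ 1
        then ENNReal.ofReal (v ((Fin.consEquiv (fun _ : Fin (k+2) => ℕ)) (j, c) 0)) else 0)
      * ∏ m : Fin (k+1), transMat N ((Fin.consEquiv (fun _ : Fin (k+2) => ℕ)) (j, c) m.castSucc)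
          ((Fin.consEquiv (fun _ : Fin (k+2) => ℕ)) (j, c) m.succ)
      = (if (j ≠ 1 ∧ ∀ m, c m ≠ 1) then ENNReal.ofReal (v j) else 0)
        * (transMat N j (c 0) * ∏ m : Fin k, transMat N (c m.castSucc) (c m.succ)) := by
    intro j c
    have hcons : (Fin.consEquiv (fun _ : Fin (k+2) => ℕ)) (j, c)
        = (Fin.cons j c : ∀ _ : Fin (k+2), ℕ) := rfl
    congr 1
    · simp only [hcons, Fin.cons_zero, Fin.cons_succ, Fin.forall_fin_succ, ne_eq]
    · simp only [hcons]
      rw [Fin.prod_univ_succ]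
      simp only [Fin.castSucc_zero, Fin.cons_zero, ← Fin.succ_castSucc, Fin.cons_succ]
  rw [tsum_congr (fun j => tsum_congr (fun c => inner_eq j c))]
  rw [ENNReal.tsum_comm]
  apply tsum_congr
  intro c
  by_cases hc : ∀ m, c m ≠ 1
  · have hc0 : c 0 ≠ 1 := hc 0
    calc ∑' j : ℕ, (if (j ≠ 1 ∧ ∀ m, c m ≠ 1) then ENNReal.ofReal (v j) else 0)
          * (transMat N j (c 0) * ∏ m : Fin k, transMat N (c m.castSucc) (c m.succ))
        = (∑' j : ℕ, ENNReal.ofReal (v j) * transMat N j (c 0))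
            * ∏ m : Fin k, transMat N (c m.castSucc) (c m.succ) := by
          rw [← ENNReal.tsum_mul_right]
          apply tsum_congr
          intro j
          by_cases hj : j = 1
          · subst hj
            have h1 : v 1 = 0 := by
              by_contra h
              have := (hv.2 1 h).1
              omega
            simp [h1, hc]
          · rw [if_pos (by exact ⟨hj, hc⟩ : (j ≠ 1 ∧ ∀ m, c m ≠ 1))]
            ring
      _ = (if ∀ m, c m ≠ 1 then ENNReal.ofReal (stepR N v (c 0)) else 0)
            * ∏ m : Fin k, transMat N (c m.castSucc) (c m.succ) := by
          rw [inner_tsum hN hv (c 0) hc0, if_pos hc]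
  · simp [hc]

lemma pathSum_one_start (N k : ℕ) :
    pathSum N k (fun p => if p = 1 then (1:ℝ) else 0) = 0 := by
  unfold pathSum
  rw [ENNReal.tsum_eq_zero]
  intro c
  by_cases hc : ∀ m, c m ≠ 1
  · simp [hc 0]
  · simp [hc]

lemma covering {Ω : Type*} [MeasurableSpace Ω] (P : Measure Ω)
    (R : ℕ → Ω → ℕ) (N i : ℕ) (hR : IsMarkovChainWith P R i (transMat N)) (k : ℕ) :
    P {ω | ∀ m < k+1, R m ω ≠ 1} ≤ pathSum N k (fun p => if p = i then (1:ℝ) else 0) := by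
  classical
  set ext : (Fin (k+1) → ℕ) → ℕ → ℕ :=
    fun c m => c ⟨min m k, lt_of_le_of_lt (min_le_right m k) (Nat.lt_succ_self k)⟩ with hext
  set S : (Fin (k+1) → ℕ) → Set Ω := fun c =>
    if (∀ m, c m ≠ 1) then {ω | ∀ m ≤ k, R m ω = ext c m} else ∅ with hS
  have hsub : {ω | ∀ m < k+1, R m ω ≠ 1} ⊆ ⋃ c, S c := by
    intro ω hω
    refine Set.mem_iUnion.2 ⟨fun m => R m ω, ?_⟩
    rw [hS]
    simp only
    rw [if_pos (show ∀ m : Fin (k+1), R (m:ℕ) ω ≠ 1 from fun m => hω (m:ℕ) m.isLt)]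
    simp only [Set.mem_setOf_eq]
    intro m hm
    show R m ω = R (min m k) ω
    congr 1
    omega
  refine (measure_mono hsub).trans ((measure_iUnion_le S).trans ?_)
  unfold pathSum
  apply ENNReal.tsum_le_tsum
  intro c
  by_cases hc : ∀ m, c m ≠ 1
  · rw [hS]
    simp only
    rw [if_pos hc, hR k (ext c)]
    have h0 : ext c 0 = c 0 := by
      simp only [hext]
      congr 1
    have hprod : ∏ m ∈ Finset.range k, transMat N (ext c m) (ext c (m+1))
        = ∏ m : Fin k, transMat N (c m.castSucc) (c m.succ) := by
      rw [← Fin.prod_univ_eq_prod_range (fun m => transMat N (ext c m) (ext c (m+1))) k]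
      apply Finset.prod_congr rfl
      intro m _
      have hm := m.isLt
      have e1 : ext c (m:ℕ) = c m.castSucc := by
        simp only [hext]
        congr 1
        apply Fin.ext
        simp only [Fin.coe_castSucc]
        omega
      have e2 : ext c ((m:ℕ)+1) = c m.succ := by
        simp only [hext]
        congr 1
        apply Fin.ext
        simp only [Fin.val_succ]
        omega
      rw [e1, e2]
    rw [h0, hprod, if_pos hc]
    apply le_of_eq
    congr 1
    by_cases hci : c 0 = i
    · rw [if_pos hci, if_pos hci]
      simp
    · rw [if_neg hci, if_neg hci]
      simp
  · rw [hS]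
    simp only
    rw [if_neg hc]
    simp

lemma pathSum_eq_iter {N : ℕ} (hN : 1 ≤ N) :
    ∀ (k : ℕ) (v : ℕ → ℝ), Gd N v →
    pathSum N k v = ENNReal.ofReal (∑ p ∈ Finset.range (N+1), ((stepR N)^[k] v) p) := by
  intro k
  induction k with
  | zero => intro v hv; exact pathSum_zero hN hv
  | succ k ih =>
    intro v hv
    rw [pathSum_succ hN k hv, ih (stepR N v) (stepR_good hN hv),
      Function.iterate_succ_apply]

noncomputable def gfact (l : ℕ) : ℝ≥0 :=
  (((l:ℝ≥0) + 2) * ((l:ℝ≥0) + 3)) / (((l:ℝ≥0) + 1) * ((l:ℝ≥0) + 4))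

lemma gfact_coe (l : ℕ) :
    ((gfact l : ℝ≥0) : ℝ) = (((l:ℝ) + 2) * ((l:ℝ) + 3)) / (((l:ℝ) + 1) * ((l:ℝ) + 4)) := by
  unfold gfact
  push_cast
  ring

lemma gfact_eq_form (l : ℕ) :
    ((gfact l : ℝ≥0) : ℝ) = (1 - 2 / (((l : ℝ) + 2) * ((l : ℝ) + 3)))⁻¹ := by
  rw [gfact_coe]
  have h1 : ((l:ℝ)+2) * ((l:ℝ)+3) ≠ 0 := by positivity
  have h2 : ((l:ℝ)+1) * ((l:ℝ)+4) ≠ 0 := by positivity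
  have key : 1 - 2 / (((l:ℝ)+2)*((l:ℝ)+3)) = (((l:ℝ)+1)*((l:ℝ)+4)) / (((l:ℝ)+2)*((l:ℝ)+3)) := by
    field_simp
    ring
  rw [key, inv_div]

lemma one_le_gfact (l : ℕ) : 1 ≤ gfact l := by
  rw [← NNReal.coe_le_coe, gfact_coe]
  have h2 : (0:ℝ) < ((l:ℝ)+1) * ((l:ℝ)+4) := by positivity
  rw [NNReal.coe_one, le_div_iff₀ h2]
  nlinarith [Nat.cast_nonneg (α := ℝ) l]

lemma prod_range_gfact (L : ℕ) :
    ((∏ l ∈ range L, gfact l : ℝ≥0) : ℝ) = 3*((L:ℝ)+1)/((L:ℝ)+3) := by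
  induction L with
  | zero => simp
  | succ L ih =>
    rw [Finset.prod_range_succ, NNReal.coe_mul, ih, gfact_coe]
    have h1 : ((L:ℝ)+3) ≠ 0 := by positivity
    have h2 : ((L:ℝ)+1) * ((L:ℝ)+4) ≠ 0 := by positivity
    push_cast
    field_simp
    ring

lemma hasProd_gfact : HasProd gfact 3 := by
  apply hasProd_of_isLUB_of_one_le 3 one_le_gfact
  constructor
  · rintro x ⟨s, rfl⟩
    simp only
    have hsub : s ⊆ range (s.sup id + 1) := by
      intro a ha
      rw [Finset.mem_range]
      have := Finset.le_sup (f := id) ha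
      simp only [id_eq] at this
      omega
    calc ∏ i ∈ s, gfact i ≤ ∏ i ∈ range (s.sup id + 1), gfact i :=
          Finset.prod_le_prod_of_subset_of_one_le' hsub (fun i _ _ => one_le_gfact i)
      _ ≤ 3 := by
          rw [← NNReal.coe_le_coe, prod_range_gfact]
          have h1 : (0:ℝ) < ((s.sup id + 1 : ℕ):ℝ)+3 := by positivity
          rw [div_le_iff₀ h1]
          push_cast
          norm_num
  · intro b hb
    rw [← NNReal.coe_le_coe]
    by_contra hb3
    push_neg at hb3
    have hb0 : (0:ℝ) ≤ b := b.coe_nonneg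
    obtain ⟨L, hL⟩ := exists_nat_gt (6/(3 - (b:ℝ)))
    have hmem : (∏ l ∈ range L, gfact l) ∈ Set.range (fun s => ∏ i ∈ s, gfact i) :=
      ⟨range L, rfl⟩
    have hle := hb hmem
    rw [← NNReal.coe_le_coe, prod_range_gfact] at hle
    have h3 : (0:ℝ) < (L:ℝ)+3 := by positivity
    have hb3' : (0:ℝ) < 3 - b := by
      push_cast at hb3 ⊢
      linarith
    have : 6/(3 - (b:ℝ)) < (L:ℝ) + 3 := by linarith
    rw [div_lt_iff₀ hb3'] at this
    rw [div_le_iff₀ h3] at hle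
    push_cast at hle hb3 this
    nlinarith

lemma tprod_gfact : ∏' l : ℕ, (1 - 2 / (((l : ℝ) + 2) * ((l : ℝ) + 3)))⁻¹ = 3 := by
  have h := hasProd_gfact.map NNReal.toRealHom.toMonoidHom NNReal.continuous_coe
  have heq : (NNReal.toRealHom.toMonoidHom ∘ gfact)
      = fun l : ℕ => (1 - 2 / (((l : ℝ) + 2) * ((l : ℝ) + 3)))⁻¹ := by
    funext l
    exact gfact_eq_form l
  rw [heq] at h
  have := h.tprod_eq
  rw [this]
  norm_num

lemma Kconst_eq : Kconst = 3 * Real.exp 1 := by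
  rw [Kconst, tprod_gfact]
  ring

lemma wvec_eq_iter (N i : ℕ) : ∀ k,
    wvec N i k = (stepR N)^[k] (fun p => if p = i then (1:ℝ) else 0) := by
  intro k
  induction k with
  | zero => rfl
  | succ k ih =>
    rw [Function.iterate_succ_apply', ← ih]
    funext p
    rfl

/-- For all `N ≥ 1`, `1 ≤ i ≤ N` and `n ≥ 1`,
`P[S^{(N,i)} ≥ n] ≤ K · max(n/N, 1) · exp(−max(n/N − 1, 0))`. -/
theorem hitting_time_tail_bound
    (N i : ℕ) (hi1 : 1 ≤ i) (hiN : i ≤ N)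
    {Ω : Type*} [MeasurableSpace Ω] (P : Measure Ω) [IsProbabilityMeasure P]
    (R : ℕ → Ω → ℕ) (hR : IsMarkovChainWith P R i (transMat N))
    (n : ℕ) (hn : 1 ≤ n) :
    P {ω | ∀ m < n, R m ω ≠ 1} ≤
      ENNReal.ofReal
        (Kconst * max ((n : ℝ) / (N : ℝ)) 1 *
          Real.exp (-(max ((n : ℝ) / (N : ℝ) - 1) 0))) := by
  have hn' : n - 1 + 1 = n := Nat.sub_add_cancel hn
  have hcov := covering P R N i hR (n-1)
  rw [hn'] at hcov
  by_cases hi : i = 1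
  · subst hi
    rw [pathSum_one_start] at hcov
    exact hcov.trans zero_le
  have hi2 : 2 ≤ i := by omega
  have hN2 : 2 ≤ N := by omega
  have hN1 : 1 ≤ N := by omega
  have hGd : Gd N (fun p => if p = i then (1:ℝ) else 0) := by
    constructor
    · intro p
      dsimp only
      split <;> norm_num
    · intro p hp
      dsimp only at hp
      by_cases h : p = i
      · subst h; exact ⟨hi2, hiN⟩
      · simp [h] at hp
  rw [pathSum_eq_iter hN1 (n-1) _ hGd, ← wvec_eq_iter N i (n-1)] at hcov
  have hN0R : (0:ℝ) < N := by exact_mod_cast hN1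
  by_cases hnN : n ≤ N
  · -- small n : trivial bound P ≤ 1 ≤ RHS
    have hx1 : (n:ℝ)/N ≤ 1 := by
      rw [div_le_one hN0R]
      exact_mod_cast hnN
    calc P {ω | ∀ m < n, R m ω ≠ 1} ≤ 1 := prob_le_one
      _ ≤ ENNReal.ofReal (Kconst * max ((n : ℝ) / (N : ℝ)) 1 *
          Real.exp (-(max ((n : ℝ) / (N : ℝ) - 1) 0))) := by
          rw [← ENNReal.ofReal_one]
          apply ENNReal.ofReal_le_ofReal
          rw [Kconst_eq, max_eq_right hx1,
            max_eq_right (by linarith : (n:ℝ)/N - 1 ≤ 0), neg_zero, Real.exp_zero]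
          have he : (2:ℝ) ≤ Real.exp 1 := by
            have := Real.add_one_le_exp (1:ℝ)
            linarith
          nlinarith
  · -- main case : n > N
    push_neg at hnN
    set k := n - 1 with hk
    set m := max 1 (N*N/n) with hm
    have hm1 : 1 ≤ m := le_max_left _ _
    have hmN : m ≤ N := by
      have h1 : N*N/n ≤ N := by
        calc N*N/n ≤ N*n/n := Nat.div_le_div_right (Nat.mul_le_mul_left N (le_of_lt hnN))
          _ = N := Nat.mul_div_cancel N (by omega)
      exact max_le (by omega) h1
    have hmk : m ≤ k := by omega
    set l := k - m with hl
    have hkml : k = m + l := by omega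
    have hdiv : N*N < n*(m+1) := by
      have h1 := Nat.div_add_mod (N*N) n
      have h2 : N*N % n < n := Nat.mod_lt _ (by omega)
      have h3 : N*N/n ≤ m := le_max_right _ _
      have h4 : n*(N*N/n) ≤ n*m := Nat.mul_le_mul_left n h3
      have h7 : n*(m+1) = n*m + n := by ring
      omega
    have hmr : (m:ℝ) ≤ (N:ℝ)*N/n + 1 := by
      have hn0R : (0:ℝ) < n := by
        have : (0:ℕ) < n := by omega
        exact_mod_cast this
      rw [hm, Nat.cast_max]
      apply max_le
      · have : (0:ℝ) ≤ (N:ℝ)*N/n := by positivity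
        push_cast
        linarith
      · calc ((N*N/n:ℕ):ℝ) ≤ ((N*N:ℕ):ℝ)/((n:ℕ):ℝ) := Nat.cast_div_le
          _ = (N:ℝ)*N/n := by push_cast; ring
          _ ≤ _ := by linarith
    obtain ⟨ht0, ht1⟩ := tfacts hN1
    -- chain of real bounds
    have c1 := mass_le_aval hN2 hi2 hiN k
    have c2 := aval_le_pow hN2 hi2 hiN m l
    rw [← hkml] at c2
    have c3 := aval_le_harmonic hN2 hi2 hiN m
    have c4 : ∑ p ∈ range (N+1), ((p:ℝ)-1) * wvec N i k p
        ≤ (((N:ℝ)-1)/N)^l * (3*N/((m:ℝ)+2)) :=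
      c2.trans (mul_le_mul_of_nonneg_left c3 (pow_nonneg ht0 l))
    have c5 : ((((N:ℝ)-1)/N))^l ≤ Real.exp (-(l:ℝ)/N) := by
      have h1 : ((N:ℝ)-1)/N ≤ Real.exp (-(1:ℝ)/N) := by
        have h2 := Real.add_one_le_exp (-(1:ℝ)/N)
        have h3 : ((N:ℝ)-1)/N = -(1:ℝ)/N + 1 := by
          field_simp
          ring
        rw [h3]
        exact h2
      calc ((((N:ℝ)-1)/N))^l ≤ (Real.exp (-(1:ℝ)/N))^l := pow_le_pow_left₀ ht0 h1 l
        _ = Real.exp (-(l:ℝ)/N) := by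
            rw [← Real.exp_nat_mul]
            congr 1
            push_cast
            ring
    set x := (n:ℝ)/N with hx
    have hx1 : 1 ≤ x := by
      rw [hx, le_div_iff₀ hN0R]
      have : (N:ℝ) ≤ n := by exact_mod_cast hnN.le
      linarith
    have hmax1 : max x 1 = x := max_eq_left hx1
    have hmax2 : max (x-1) 0 = x - 1 := max_eq_left (by linarith)
    have hxN : x * N = n := by
      rw [hx]
      field_simp
    have hfrac : 3*(N:ℝ)/((m:ℝ)+2) ≤ 3*x := by
      rw [div_le_iff₀ (by positivity)]
      have hcast : (N:ℝ)*N < (n:ℝ)*((m:ℝ)+1) := by exact_mod_cast hdiv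
      have hm0 : (0:ℝ) ≤ m := Nat.cast_nonneg m
      nlinarith
    have hexp : Real.exp (-(l:ℝ)/N) ≤ Real.exp (2 - x) := by
      apply Real.exp_le_exp.2
      have hnl : l + m + 1 = n := by omega
      have hlval : (l:ℝ) = (n:ℝ) - m - 1 := by
        have := congrArg (Nat.cast : ℕ → ℝ) hnl
        push_cast at this
        linarith
      have hn0R : (0:ℝ) < n := by
        have : (0:ℕ) < n := by omega
        exact_mod_cast this
      have hm2 : ((m:ℝ)+1)/N ≤ 2 := by
        have h1 : ((m:ℝ)+1)/N ≤ ((N:ℝ)*N/n + 2)/N := by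
          have hnum : (m:ℝ)+1 ≤ (N:ℝ)*N/n + 2 := by linarith
          rw [div_le_div_iff₀ hN0R hN0R]
          nlinarith
        have h2 : ((N:ℝ)*N/n + 2)/N = (N:ℝ)/n + 2/N := by
          field_simp
        have h3 : (N:ℝ)/n ≤ 1 := by
          rw [div_le_one hn0R]
          exact_mod_cast hnN.le
        have h4 : 2/(N:ℝ) ≤ 1 := by
          rw [div_le_one hN0R]
          exact_mod_cast hN2
        linarith
      have expand : -((l:ℝ))/N = ((m:ℝ)+1)/N - x := by
        rw [hlval, hx]
        ring
      rw [expand]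
      linarith
    have hreal : ∑ p ∈ range (N+1), wvec N i k p
        ≤ Kconst * max x 1 * Real.exp (-(max (x-1) 0)) := by
      rw [hmax1, hmax2, Kconst_eq]
      have hee : Real.exp 1 * Real.exp (-(x-1)) = Real.exp (2-x) := by
        rw [← Real.exp_add]
        congr 1
        ring
      have target_eq : 3 * Real.exp 1 * x * Real.exp (-(x-1)) = 3*x*Real.exp (2 - x) := by
        calc 3*Real.exp 1*x*Real.exp (-(x-1)) = 3*x*(Real.exp 1*Real.exp (-(x-1))) := by ring
          _ = 3*x*Real.exp (2-x) := by rw [hee]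
      rw [target_eq]
      calc ∑ p ∈ range (N+1), wvec N i k p
          ≤ ∑ p ∈ range (N+1), ((p:ℝ)-1) * wvec N i k p := c1
        _ ≤ (((N:ℝ)-1)/N)^l * (3*N/((m:ℝ)+2)) := c4
        _ ≤ Real.exp (-(l:ℝ)/N) * (3*N/((m:ℝ)+2)) :=
            mul_le_mul_of_nonneg_right c5 (by positivity)
        _ ≤ Real.exp (2-x) * (3*x) :=
            mul_le_mul hexp hfrac (by positivity) (Real.exp_nonneg _)
        _ = 3*x*Real.exp (2-x) := by ring
    exact hcov.trans (ENNReal.ofReal_le_ofReal hreal)
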